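/- Let Γ be a set of subsets of a set A and define the encoding I(Q) := the downset of (ℕ^Γ, ⊑) generated by {pt(ρ) : ρ ∈ Q} for Q ⊆ DD(Γ). If Q₁, Q₂ ⊆ DD(Γ) satisfy I(Q₁) ⊆ I(Q₂), then Pol(Q₂) ⊆ Pol(Q₁). -/
import Mathlib


/-- The `n`-ary cross relation defined by the tuple `γ` of unary relations:
`{(x₁,…,xₙ) : x₁ ∈ γ₁ ∨ … ∨ xₙ ∈ γₙ}`. -/
def Cross {A : Type*} {n : ℕ} (γ : Fin n → Set A) : Set (Fin n → A) :=
  {x | ∃ i, x i ∈ γ i}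

/-- A finitary relation on `A`: an arity together with a set of tuples. -/
abbrev FinRel (A : Type*) := Σ n : ℕ, Set (Fin n → A)

/-- A `k`-ary operation `f` preserves an `n`-ary relation `ρ`. -/
def Preserves {A : Type*} {k n : ℕ} (f : (Fin k → A) → A) (ρ : Set (Fin n → A)) : Prop :=
  ∀ r : Fin k → Fin n → A, (∀ j, r j ∈ ρ) → (fun i => f fun j => r j i) ∈ ρ

/-- A finitary operation on `A` of positive arity `k + 1`. -/
abbrev Op (A : Type*) := Σ k : ℕ, (Fin (k + 1) → A) → A

/-- The polymorphism clone of a set of finitary relations. -/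
def Pol {A : Type*} (Q : Set (FinRel A)) : Set (Op A) :=
  {f | ∀ ρ ∈ Q, Preserves f.2 ρ.2}

/-- Relations disjunctively definable from the unary language `Γ`. -/
def DD {A : Type*} (Γ : Set (Set A)) : Set (FinRel A) :=
  {ρ | 1 ≤ ρ.1 ∧ ∃ γ : Fin ρ.1 → Set A, (∀ i, γ i ∈ Γ) ∧ ρ.2 = Cross γ}

/-- Support of a tuple of naturals. -/
def supp {I : Type*} (x : I → ℕ) : Set I := {i | x i ≠ 0}

/-- The order `⊑` on `ℕ^I`: pointwise `≤` together with equal supports. -/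
def sle {I : Type*} (x y : I → ℕ) : Prop := (∀ i, x i ≤ y i) ∧ supp x = supp y

/-- Downsets of the poset `(ℕ^I, ⊑)`. -/
def IsSleDownset {I : Type*} (X : Set (I → ℕ)) : Prop :=
  ∀ x ∈ X, ∀ y, sle y x → y ∈ X

open Classical in
/-- The canonical parameter tuple of a relation: the unique tuple of members of `Γ`
defining it as a cross if it is a proper subset of the full power, and `(A,…,A)` otherwise. -/
noncomputable def param {A : Type*} (Γ : Set (Set A)) (ρ : FinRel A) : Fin ρ.1 → Set A :=
  if ρ.2 = Set.univ then fun _ => Set.univ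
  else if h : ∃ γ : Fin ρ.1 → Set A, (∀ i, γ i ∈ Γ) ∧ ρ.2 = Cross γ then h.choose
  else fun _ => ∅

/-- The pattern of a relation: how often each `γ ∈ Γ` occurs in its canonical parameter. -/
noncomputable def pt {A : Type*} (Γ : Set (Set A)) (ρ : FinRel A) : ↥Γ → ℕ :=
  fun γ => Nat.card {i : Fin ρ.1 // param Γ ρ i = (γ : Set A)}

/-- The encoding map `I`: the downset of `(ℕ^Γ, ⊑)` generated by the patterns of `Q`. -/
def enc {A : Type*} (Γ : Set (Set A)) (Q : Set (FinRel A)) : Set (↥Γ → ℕ) :=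
  {x | ∃ ρ ∈ Q, sle x (pt Γ ρ)}

/-- `F^Inv`: the relations in `DD Γ` preserved by every operation in `F`. -/
def InvDD {A : Type*} (Γ : Set (Set A)) (F : Set (Op A)) : Set (FinRel A) :=
  {ρ | ρ ∈ DD Γ ∧ ∀ f ∈ F, Preserves f.2 ρ.2}

lemma exists_surj_of_card {α β : Type*} [Finite α] [Finite β]
    (hcard : Nat.card β ≤ Nat.card α) (h2 : Nonempty α → Nonempty β) :
    ∃ g : α → β, Function.Surjective g := by
  cases isEmpty_or_nonempty α with
  | inl hα =>
    have h0 : Nat.card α = 0 := Nat.card_of_isEmpty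
    have hβ : IsEmpty β := by
      by_contra hne
      rw [not_isEmpty_iff] at hne
      have := Nat.card_pos (α := β)
      omega
    exact ⟨fun a => (hα.false a).elim, fun b => (hβ.false b).elim⟩
  | inr hα =>
    have hβ : Nonempty β := h2 hα
    have := Fintype.ofFinite α
    have := Fintype.ofFinite β
    rw [Nat.card_eq_fintype_card, Nat.card_eq_fintype_card] at hcard
    obtain ⟨e⟩ := Function.Embedding.nonempty_of_card_le hcard
    exact ⟨Function.invFun e, Function.invFun_surjective e.injective⟩

lemma preserves_cross_of_surj {A : Type*} {k n m : ℕ} (f : (Fin k → A) → A)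
    (γ : Fin n → Set A) (δ : Fin m → Set A) (σ : Fin m → Fin n)
    (hσ : Function.Surjective σ) (hcomp : ∀ j, γ (σ j) = δ j)
    (hf : Preserves f (Cross δ)) : Preserves f (Cross γ) := by
  intro r hr
  have hr' : ∀ j, (fun j' => r j (σ j')) ∈ Cross δ := by
    intro j
    obtain ⟨i, hi⟩ := hr j
    obtain ⟨j', hj'⟩ := hσ i
    exact ⟨j', show r j (σ j') ∈ δ j' by rw [← hcomp j', hj']; exact hi⟩
  obtain ⟨j0, hj0⟩ := hf (fun j j' => r j (σ j')) hr'
  exact ⟨σ j0, by rw [hcomp j0]; exact hj0⟩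

lemma param_spec {A : Type*} (Γ : Set (Set A)) (ρ : FinRel A) (hρ : ρ ∈ DD Γ)
    (hne : ρ.2 ≠ Set.univ) :
    (∀ i, param Γ ρ i ∈ Γ) ∧ ρ.2 = Cross (param Γ ρ) := by
  obtain ⟨h1, hex⟩ := hρ
  rw [param, if_neg hne, dif_pos hex]
  exact hex.choose_spec

/-- If the downsets of `(ℕ^Γ, ⊑)` generated by the patterns of `Q₁` and `Q₂` are
included in one another, then the polymorphism clones satisfy the dual inclusion. -/
theorem pol_antitone_of_enc_subset {A : Type*} (Γ : Set (Set A))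
    (Q₁ Q₂ : Set (FinRel A)) (hQ₁ : Q₁ ⊆ DD Γ) (hQ₂ : Q₂ ⊆ DD Γ)
    (h : enc Γ Q₁ ⊆ enc Γ Q₂) :
    Pol Q₂ ⊆ Pol Q₁ := by
  intro f hf ρ₁ hρ₁
  by_cases hu : ρ₁.2 = Set.univ
  · intro r hr
    rw [hu]
    trivial
  obtain ⟨hγΓ, hγ⟩ := param_spec Γ ρ₁ (hQ₁ hρ₁) hu
  obtain ⟨ρ₂, hρ₂, hle, hsupp⟩ :
      ∃ ρ₂ ∈ Q₂, (∀ s, pt Γ ρ₁ s ≤ pt Γ ρ₂ s) ∧ supp (pt Γ ρ₁) = supp (pt Γ ρ₂) := by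
    obtain ⟨ρ₂, hρ₂, h1, h2⟩ := h (show pt Γ ρ₁ ∈ enc Γ Q₁ from
      ⟨ρ₁, hρ₁, fun _ => le_refl _, rfl⟩)
    exact ⟨ρ₂, hρ₂, h1, h2⟩
  set γ := param Γ ρ₁ with hγdef
  have hn1 : 1 ≤ ρ₁.1 := (hQ₁ hρ₁).1
  -- from support equality: every value of γ occurs as a value of param Γ ρ₂
  have hocc : ∀ i : Fin ρ₁.1, ∃ j : Fin ρ₂.1, param Γ ρ₂ j = γ i := by
    intro i
    have h1 : pt Γ ρ₁ ⟨γ i, hγΓ i⟩ ≠ 0 :=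
      Nat.card_ne_zero.mpr ⟨⟨⟨i, rfl⟩⟩, inferInstance⟩
    have h2 : pt Γ ρ₂ ⟨γ i, hγΓ i⟩ ≠ 0 :=
      (Set.ext_iff.mp hsupp ⟨γ i, hγΓ i⟩).mp h1
    obtain ⟨⟨j, hj⟩, _⟩ := Nat.card_ne_zero.mp h2
    exact ⟨j, hj⟩
  by_cases hu2 : ρ₂.2 = Set.univ
  · -- then every γ i = univ, so ρ₁.2 = univ, contradiction
    exfalso
    apply hu
    have hp2 : param Γ ρ₂ = fun _ => Set.univ := by rw [param, if_pos hu2]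
    have huniv : ∀ i, γ i = Set.univ := by
      intro i
      obtain ⟨j, hj⟩ := hocc i
      rw [hp2] at hj
      exact hj.symm
    rw [hγ, Set.eq_univ_iff_forall]
    intro x
    exact ⟨⟨0, hn1⟩, by rw [huniv ⟨0, hn1⟩]; trivial⟩
  obtain ⟨hδΓ, hδ⟩ := param_spec Γ ρ₂ (hQ₂ hρ₂) hu2
  set δ := param Γ ρ₂ with hδdef
  -- fiberwise surjections
  have key : ∀ s : Set A, ∃ g : {j : Fin ρ₂.1 // δ j = s} → {i : Fin ρ₁.1 // γ i = s},
      Function.Surjective g := by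
    intro s
    by_cases hs : s ∈ Γ
    · apply exists_surj_of_card
      · exact hle ⟨s, hs⟩
      · intro hne
        have h2 : pt Γ ρ₂ ⟨s, hs⟩ ≠ 0 := Nat.card_ne_zero.mpr ⟨hne, inferInstance⟩
        have h1 : pt Γ ρ₁ ⟨s, hs⟩ ≠ 0 :=
          (Set.ext_iff.mp hsupp ⟨s, hs⟩).mpr h2
        exact (Nat.card_ne_zero.mp h1).1
    · exact ⟨fun j => absurd (j.2 ▸ hδΓ j.1) hs, fun i => absurd (i.2 ▸ hγΓ i.1) hs⟩
  choose g hg using key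
  set σ : Fin ρ₂.1 → Fin ρ₁.1 := fun j => (g (δ j) ⟨j, rfl⟩ : {i // γ i = δ j}) with hσdef
  have haux : ∀ (s : Set A) (j : Fin ρ₂.1) (hj : δ j = s),
      ((g s ⟨j, hj⟩ : {i // γ i = s}) : Fin ρ₁.1) = σ j := by
    intro s j hj
    subst hj
    rfl
  have hcomp : ∀ j, γ (σ j) = δ j := fun j => (g (δ j) ⟨j, rfl⟩).2
  have hσsurj : Function.Surjective σ := by
    intro i
    obtain ⟨⟨j, hj⟩, hgj⟩ := hg (γ i) ⟨i, rfl⟩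
    refine ⟨j, ?_⟩
    rw [← haux (γ i) j hj, hgj]
  rw [hγ]
  exact preserves_cross_of_surj f.2 γ δ σ hσsurj hcomp (hδ ▸ hf ρ₂ hρ₂)
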